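/- For each positive integer δ, there are only finitely many templates of cogenus δ; that is, the set of finite multisets Γ of edges that are templates and satisfy δ(Γ) = δ is finite. -/

import Mathlib

/-- An edge `(a, b, w)` with `a < b` and `w ≥ 1` which is not short
(i.e. not both `b = a + 1` and `w = 1`). -/
def IsLongEdge (e : ℕ × ℕ × ℕ) : Prop :=
  e.1 < e.2.1 ∧ 1 ≤ e.2.2 ∧ ¬ (e.2.1 = e.1 + 1 ∧ e.2.2 = 1)

/-- A long-edge graph: a finite multiset of edges, none of which is short. -/
def IsLongEdgeGraph (G : Multiset (ℕ × ℕ × ℕ)) : Prop :=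
  ∀ e ∈ G, IsLongEdge e

/-- `L(G)`: the minimum left endpoint of an edge of `G`. -/
noncomputable def legL (G : Multiset (ℕ × ℕ × ℕ)) : ℕ :=
  sInf {n | ∃ e ∈ G, (e : ℕ × ℕ × ℕ).1 = n}

/-- `R(G)`: the maximum right endpoint of an edge of `G`. -/
noncomputable def legR (G : Multiset (ℕ × ℕ × ℕ)) : ℕ :=
  sSup {n | ∃ e ∈ G, (e : ℕ × ℕ × ℕ).2.1 = n}

/-- The vertex `v` is covered by `G`. -/
def Covers (G : Multiset (ℕ × ℕ × ℕ)) (v : ℕ) : Prop :=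
  ∃ e ∈ G, (e : ℕ × ℕ × ℕ).1 < v ∧ v < e.2.1

/-- A nonempty long-edge graph all of whose internal vertices are covered. -/
def IsOffsetTemplate (Γ : Multiset (ℕ × ℕ × ℕ)) : Prop :=
  IsLongEdgeGraph Γ ∧ Γ ≠ 0 ∧ ∀ v : ℕ, legL Γ < v → v < legR Γ → Covers Γ v

/-- A template: an offset template with `L(Γ) = 0`. -/
def IsTemplate (Γ : Multiset (ℕ × ℕ × ℕ)) : Prop :=
  IsOffsetTemplate Γ ∧ legL Γ = 0

/-- The cogenus `δ(G) = ∑_{(a,b,w) ∈ G} ((b−a)·w − 1)`, summed with multiplicity. -/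
def cogenus (G : Multiset (ℕ × ℕ × ℕ)) : ℕ :=
  (G.map (fun e => (e.2.1 - e.1) * e.2.2 - 1)).sum

-- auxiliary lemmas

lemma aux_card_le (Γ : Multiset (ℕ × ℕ × ℕ)) (h : IsLongEdgeGraph Γ) :
    Multiset.card Γ ≤ cogenus Γ := by
  have : ((Γ.map (fun _ => 1)).sum : ℕ) ≤ (Γ.map (fun e => (e.2.1 - e.1) * e.2.2 - 1)).sum := by
    apply Multiset.sum_map_le_sum_map
    intro e he
    obtain ⟨h1, h2, h3⟩ := h e he
    have h2' : 2 ≤ (e.2.1 - e.1) * e.2.2 := by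
      rcases Nat.lt_or_ge e.2.1 (e.1 + 2) with hb | hb
      · have hb1 : e.2.1 = e.1 + 1 := by omega
        have hw : 2 ≤ e.2.2 := by
          rcases Nat.lt_or_ge e.2.2 2 with hw | hw
          · exact absurd ⟨hb1, by omega⟩ h3
          · exact hw
        have : e.2.1 - e.1 = 1 := by omega
        nlinarith
      · have : 2 ≤ e.2.1 - e.1 := by omega
        nlinarith
    omega
  simpa [cogenus] using this

lemma aux_edge_le (Γ : Multiset (ℕ × ℕ × ℕ)) (e : ℕ × ℕ × ℕ) (he : e ∈ Γ) :
    (e.2.1 - e.1) * e.2.2 - 1 ≤ cogenus Γ := by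
  apply Multiset.single_le_sum (fun x _ => Nat.zero_le x)
  exact Multiset.mem_map_of_mem _ he

lemma aux_R_bound (Γ : Multiset (ℕ × ℕ × ℕ)) (h : IsTemplate Γ) :
    legR Γ ≤ cogenus Γ + 1 := by
  classical
  obtain ⟨⟨hleg, hne, hcov⟩, hL⟩ := h
  set R := legR Γ with hR
  set δ := cogenus Γ with hδ
  -- covering argument
  have hsub : Finset.Ioo 0 R ⊆ Γ.toFinset.biUnion (fun e => Finset.Ioo e.1 e.2.1) := by
    intro v hv
    rw [Finset.mem_Ioo] at hv
    obtain ⟨e, heΓ, hav, hvb⟩ := hcov v (by omega) hv.2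
    rw [Finset.mem_biUnion]
    exact ⟨e, Multiset.mem_toFinset.2 heΓ, Finset.mem_Ioo.2 ⟨hav, hvb⟩⟩
  have h1 : R - 1 ≤ ∑ e ∈ Γ.toFinset, ((e.2.1 - e.1) * e.2.2 - 1) := by
    calc R - 1 = (Finset.Ioo 0 R).card := by rw [Nat.card_Ioo]; omega
    _ ≤ (Γ.toFinset.biUnion (fun e => Finset.Ioo e.1 e.2.1)).card := Finset.card_le_card hsub
    _ ≤ ∑ e ∈ Γ.toFinset, (Finset.Ioo e.1 e.2.1).card := Finset.card_biUnion_le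
    _ ≤ ∑ e ∈ Γ.toFinset, ((e.2.1 - e.1) * e.2.2 - 1) := by
        apply Finset.sum_le_sum
        intro e he
        rw [Nat.card_Ioo]
        obtain ⟨_, hw, _⟩ := hleg e (Multiset.mem_toFinset.1 he)
        have : e.2.1 - e.1 ≤ (e.2.1 - e.1) * e.2.2 := Nat.le_mul_of_pos_right _ hw
        omega
  have h2 : ∑ e ∈ Γ.toFinset, ((e.2.1 - e.1) * e.2.2 - 1) ≤ δ := by
    rw [hδ, cogenus, Finset.sum_multiset_map_count]
    apply Finset.sum_le_sum
    intro e he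
    have hc : 1 ≤ Γ.count e := Multiset.one_le_count_iff_mem.2 (Multiset.mem_toFinset.1 he)
    calc (e.2.1 - e.1) * e.2.2 - 1 = 1 * ((e.2.1 - e.1) * e.2.2 - 1) := (one_mul _).symm
    _ ≤ Γ.count e * ((e.2.1 - e.1) * e.2.2 - 1) := Nat.mul_le_mul_right _ hc
    _ = Γ.count e • ((e.2.1 - e.1) * e.2.2 - 1) := rfl
  omega

lemma aux_b_le_R (Γ : Multiset (ℕ × ℕ × ℕ)) (e : ℕ × ℕ × ℕ) (he : e ∈ Γ) :
    e.2.1 ≤ legR Γ := by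
  classical
  apply le_csSup
  · have : {n | ∃ e ∈ Γ, (e : ℕ × ℕ × ℕ).2.1 = n} = ↑(Γ.toFinset.image (fun e => e.2.1)) := by
      ext n
      simp [Multiset.mem_toFinset, eq_comm]
    rw [this]
    exact (Γ.toFinset.image _).finite_toSet.bddAbove
  · exact ⟨e, he, rfl⟩


/-- There are finitely many templates of a given cogenus. -/
theorem finitely_many_templates (δ : ℕ) (hδ : 0 < δ) :
    {Γ : Multiset (ℕ × ℕ × ℕ) | IsTemplate Γ ∧ cogenus Γ = δ}.Finite := by
  classical
  set F : Finset (ℕ × ℕ × ℕ) :=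
    Finset.range (δ + 2) ×ˢ Finset.range (δ + 2) ×ˢ Finset.range (δ + 2) with hF
  apply Set.Finite.subset ((δ • F.val).powerset.toFinset.finite_toSet)
  intro Γ hΓ
  obtain ⟨hT, hc⟩ := hΓ
  simp only [Finset.coe_sort_coe, Finset.mem_coe, Multiset.mem_toFinset, Multiset.mem_powerset]
  rw [Multiset.le_iff_count]
  intro e
  by_cases he : e ∈ Γ
  · have hmemF : e ∈ F := by
      obtain ⟨hab, hw, _⟩ := hT.1.1 e he
      have hbR : e.2.1 ≤ legR Γ := aux_b_le_R Γ e he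
      have hR : legR Γ ≤ δ + 1 := by rw [← hc]; exact aux_R_bound Γ hT
      have hedge : (e.2.1 - e.1) * e.2.2 - 1 ≤ δ := by rw [← hc]; exact aux_edge_le Γ e he
      have hmul : 1 ≤ (e.2.1 - e.1) * e.2.2 :=
        Nat.one_le_iff_ne_zero.2 (Nat.mul_ne_zero (by omega) (by omega))
      have hmul2 : (e.2.1 - e.1) * e.2.2 ≤ δ + 1 := by omega
      have hwb : e.2.2 ≤ δ + 1 :=
        le_trans (Nat.le_mul_of_pos_left _ (by omega)) hmul2
      simp only [hF, Finset.mem_product, Finset.mem_range]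
      exact ⟨by omega, by omega, by omega⟩
    have hcount : Multiset.count e F.val = 1 :=
      Multiset.count_eq_one_of_mem F.nodup hmemF
    rw [Multiset.count_nsmul, hcount, mul_one]
    calc Multiset.count e Γ ≤ Multiset.card Γ := Multiset.count_le_card e Γ
    _ ≤ cogenus Γ := aux_card_le Γ hT.1.1
    _ = δ := hc
  · simp [Multiset.count_eq_zero_of_notMem he]
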